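/- Let n ≥ 1, let x, y ∈ [0,∞)^n, and fix an integer r ≥ 0. If Σ_{i=1}^n ψ_r(x_i t) ≥ Σ_{i=1}^n ψ_r(y_i t) for all real t > 0, then ‖x‖_p ≥ ‖y‖_p for every real p with r ≤ p ≤ r+1. -/

import Mathlib

open scoped BigOperators

/-- The `p`-norm `((1/n) Σ xᵢ^p)^(1/p)` for `p ≠ 0`, and the geometric mean
`(Π xᵢ)^(1/n)` for `p = 0`. -/
noncomputable def pNorm {n : ℕ} (p : ℝ) (x : Fin n → ℝ) : ℝ :=
  if p = 0 then (∏ i, x i) ^ ((n : ℝ)⁻¹)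
  else ((n : ℝ)⁻¹ * ∑ i, x i ^ p) ^ p⁻¹

/-- `Q_r(s) = Σ_{m=1}^r (-1)^(m-1) s^m / m`, the `r`-th Taylor polynomial of `log(1+s)`
(`Q_0 = 0`), and `ψ_r(t) = (-1)^r (log(1+t) - Q_r(t))`. -/
noncomputable def psiFun (r : ℕ) (t : ℝ) : ℝ :=
  (-1 : ℝ) ^ r *
    (Real.log (1 + t) - ∑ m ∈ Finset.Icc 1 r, (-1 : ℝ) ^ (m - 1) * t ^ m / m)

open MeasureTheory Set

lemma geo_reindex (r : ℕ) (t : ℝ) :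
    ∑ m ∈ Finset.Icc 1 r, (-1 : ℝ) ^ (m - 1) * t ^ (m - 1)
      = ∑ k ∈ Finset.range r, (-t) ^ k := by
  induction r with
  | zero => simp
  | succ n ih =>
      rw [Finset.sum_Icc_succ_top (by omega), ih, Finset.sum_range_succ, neg_pow t n]
      norm_num

lemma psi_hasDerivAt (r : ℕ) {t : ℝ} (ht : -1 < t) :
    HasDerivAt (psiFun r) (t ^ r / (1 + t)) t := by
  have h1t : (1 : ℝ) + t ≠ 0 := by linarith
  have hlog : HasDerivAt (fun s : ℝ => Real.log (1 + s)) (1 / (1 + t)) t := by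
    have := ((hasDerivAt_id t).const_add 1).log h1t
    simpa using this
  have hsum : HasDerivAt (fun s : ℝ => ∑ m ∈ Finset.Icc 1 r, (-1 : ℝ) ^ (m - 1) * s ^ m / m)
      (∑ m ∈ Finset.Icc 1 r, (-1 : ℝ) ^ (m - 1) * t ^ (m - 1)) t := by
    apply HasDerivAt.fun_sum
    intro m hm
    have hm1 : 1 ≤ m := (Finset.mem_Icc.mp hm).1
    have hmne : (m : ℝ) ≠ 0 := by positivity
    have : HasDerivAt (fun s : ℝ => (-1 : ℝ) ^ (m - 1) * s ^ m / m)
        ((-1 : ℝ) ^ (m - 1) * (m * t ^ (m - 1)) / m) t := by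
      exact (((hasDerivAt_pow m t).const_mul _).div_const _)
    refine this.congr_deriv (Eq.symm ?_)
    field_simp
  have := ((hlog.sub hsum).const_mul ((-1 : ℝ) ^ r))
  have hfun : psiFun r = fun s : ℝ => (-1:ℝ)^r * (Real.log (1 + s) - ∑ m ∈ Finset.Icc 1 r, (-1 : ℝ) ^ (m - 1) * s ^ m / m) := rfl
  rw [hfun]
  refine this.congr_deriv (Eq.symm ?_)
  have hgeo := geo_reindex r t
  have hne : (-t) ≠ 1 := by intro hc; rw [← hc] at ht; linarith
  rw [hgeo, geom_sum_eq hne]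
  have h2 : (-t) - 1 = -(1+t) := by ring
  rw [h2, div_neg]
  field_simp
  ring_nf
  rw [mul_comm, mul_comm r 2, pow_mul, neg_one_sq, one_pow, one_mul]

lemma psi_zero' (r : ℕ) : psiFun r 0 = 0 := by
  have : ∀ m ∈ Finset.Icc 1 r, (-1 : ℝ) ^ (m - 1) * (0:ℝ) ^ m / m = 0 := by
    intro m hm
    have : 1 ≤ m := (Finset.mem_Icc.mp hm).1
    rw [zero_pow (by omega)]; ring
  simp [psiFun, Finset.sum_eq_zero this]

lemma psi_cont_integrand {t : ℝ} (r : ℕ) (ht : 0 ≤ t) :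
    IntervalIntegrable (fun u : ℝ => u ^ r / (1 + u)) volume 0 t := by
  apply ContinuousOn.intervalIntegrable
  apply ContinuousOn.div (continuous_pow r).continuousOn
    ((continuous_const.add continuous_id).continuousOn)
  intro u hu
  rw [Set.uIcc_of_le ht] at hu
  have := hu.1
  intro hc; simp at hc; linarith

lemma psi_eq_integral (r : ℕ) {t : ℝ} (ht : 0 ≤ t) :
    psiFun r t = ∫ u in (0:ℝ)..t, u ^ r / (1 + u) := by
  rw [intervalIntegral.integral_eq_sub_of_hasDerivAt
    (f := psiFun r) (fun u hu => by
      rw [Set.uIcc_of_le ht] at hu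
      exact psi_hasDerivAt r (by linarith [hu.1]))
    (psi_cont_integrand r ht), psi_zero', sub_zero]

lemma psi_nonneg (r : ℕ) {t : ℝ} (ht : 0 ≤ t) : 0 ≤ psiFun r t := by
  rw [psi_eq_integral r ht]
  apply intervalIntegral.integral_nonneg ht
  intro u hu
  have h1 : 0 ≤ u := hu.1
  positivity

lemma psi_pos (r : ℕ) {t : ℝ} (ht : 0 < t) : 0 < psiFun r t := by
  rw [psi_eq_integral r ht.le]
  apply intervalIntegral.intervalIntegral_pos_of_pos_on (psi_cont_integrand r ht.le) _ ht
  intro u hu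
  have h1 : 0 < u := hu.1
  positivity

lemma psi_mono (r : ℕ) {a b : ℝ} (ha : 0 ≤ a) (hab : a ≤ b) :
    psiFun r a ≤ psiFun r b := by
  rw [psi_eq_integral r ha, psi_eq_integral r (ha.trans hab)]
  apply intervalIntegral.integral_mono_interval (le_refl (0:ℝ)) ha hab
  · filter_upwards [MeasureTheory.ae_restrict_mem measurableSet_Ioc] with u hu
    have h1 : 0 < u := hu.1
    positivity
  · exact psi_cont_integrand r (ha.trans hab)

lemma pow_div_le_rpow (r : ℕ) {q u : ℝ} (hq1 : (r:ℝ) ≤ q) (hq2 : q ≤ r + 1)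
    (hu : 0 < u) : u ^ r / (1 + u) ≤ u ^ (q - 1) := by
  have h1u : (0:ℝ) < 1 + u := by linarith
  rw [div_le_iff₀ h1u]
  have hur : (u : ℝ) ^ r = u ^ ((r : ℝ)) := (Real.rpow_natCast u r).symm
  have hsplit : u ^ (q - 1) * (1 + u) = u ^ (q-1) + u ^ q := by
    rw [mul_add, mul_one]
    congr 1
    rw [← Real.rpow_add_one hu.ne' (q-1)]
    ring_nf
  rw [hur, hsplit]
  rcases le_total u 1 with h1 | h1
  · have : u ^ ((r:ℝ)) ≤ u ^ (q - 1) :=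
      Real.rpow_le_rpow_of_exponent_ge hu h1 (by linarith)
    have h2 : 0 ≤ u ^ q := (Real.rpow_pos_of_pos hu q).le
    linarith
  · have : u ^ ((r:ℝ)) ≤ u ^ q :=
      Real.rpow_le_rpow_of_exponent_le h1 hq1
    have h2 : 0 ≤ u ^ (q-1) := (Real.rpow_pos_of_pos hu _).le
    linarith

lemma psi_le (r : ℕ) {q t : ℝ} (hq : 0 < q) (hq1 : (r:ℝ) ≤ q) (hq2 : q ≤ r + 1)
    (ht : 0 ≤ t) : psiFun r t ≤ t ^ q / q := by
  rw [psi_eq_integral r ht, intervalIntegral.integral_of_le ht]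
  have h2 : (∫ u in Set.Ioc (0:ℝ) t, u ^ (q-1)) = t ^ q / q := by
    rw [← intervalIntegral.integral_of_le ht, integral_rpow (Or.inl (by linarith))]
    rw [sub_add_cancel, Real.zero_rpow hq.ne', sub_zero]
  rw [← h2]
  apply MeasureTheory.setIntegral_mono_on
  · exact (intervalIntegrable_iff_integrableOn_Ioc_of_le ht).1 (psi_cont_integrand r ht)
  · exact (intervalIntegrable_iff_integrableOn_Ioc_of_le ht).1
      (intervalIntegral.intervalIntegrable_rpow' (by linarith))
  · exact measurableSet_Ioc
  · exact fun u hu => pow_div_le_rpow r hq1 hq2 hu.1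


lemma aux_contOn (r : ℕ) (p c : ℝ) (hc : 0 < c) :
    ContinuousOn (fun u : ℝ => psiFun r (c * u) * u ^ (-p - 1)) (Set.Ioi 0) := by
  intro u hu
  have hu0 : (0:ℝ) < u := hu
  apply ContinuousWithinAt.mul
  · exact (((psi_hasDerivAt r (show (-1:ℝ) < c * u by nlinarith)).continuousAt).comp
      ((continuous_const.mul continuous_id).continuousAt)).continuousWithinAt
  · exact (Real.continuousAt_rpow_const u _ (Or.inl hu0.ne')).continuousWithinAt

lemma aux_meas (r : ℕ) (p c : ℝ) (hc : 0 < c) {s : Set ℝ} (hs : MeasurableSet s)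
    (hsub : s ⊆ Set.Ioi 0) :
    MeasureTheory.AEStronglyMeasurable (fun u : ℝ => psiFun r (c * u) * u ^ (-p - 1))
      (volume.restrict s) :=
  ((aux_contOn r p c hc).mono hsub).aestronglyMeasurable hs

lemma aux_integrable (r : ℕ) {p c : ℝ} (hrp : (r : ℝ) < p) (hpr : p < r + 1)
    (hc : 0 < c) :
    MeasureTheory.IntegrableOn (fun u : ℝ => psiFun r (c * u) * u ^ (-p - 1))
      (Set.Ioi 0) := by
  rw [← Set.Ioc_union_Ioi_eq_Ioi (zero_le_one (α := ℝ))]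
  have habs : ∀ u : ℝ, 0 < u → ∀ q : ℝ, 0 < q → (r:ℝ) ≤ q → q ≤ r + 1 →
      ‖psiFun r (c * u) * u ^ (-p - 1)‖ ≤ c ^ q / q * u ^ (q - p - 1) := by
    intro u hu q hq hq1 hq2
    have hcu : 0 < c * u := mul_pos hc hu
    rw [Real.norm_eq_abs, abs_of_nonneg (mul_nonneg (psi_nonneg r hcu.le)
      (Real.rpow_nonneg hu.le _))]
    have h1 : psiFun r (c * u) ≤ (c * u) ^ q / q := psi_le r hq hq1 hq2 hcu.le
    have h2 : (c * u) ^ q / q = c ^ q / q * u ^ q := by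
      rw [Real.mul_rpow hc.le hu.le]; ring
    calc psiFun r (c * u) * u ^ (-p-1)
        ≤ (c ^ q / q * u ^ q) * u ^ (-p-1) :=
          mul_le_mul_of_nonneg_right (h1.trans h2.le) (Real.rpow_nonneg hu.le _)
      _ = c ^ q / q * u ^ (q - p - 1) := by
          rw [mul_assoc, ← Real.rpow_add hu]; ring_nf
  apply MeasureTheory.IntegrableOn.union
  · apply MeasureTheory.Integrable.mono'
      (g := fun u : ℝ => c ^ ((r:ℝ)+1) / ((r:ℝ)+1) * u ^ ((r:ℝ) - p))
    · exact ((intervalIntegrable_iff_integrableOn_Ioc_of_le zero_le_one).1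
        (intervalIntegral.intervalIntegrable_rpow' (by linarith))).const_mul _
    · exact aux_meas r p c hc measurableSet_Ioc (Set.Ioc_subset_Ioi_self)
    · filter_upwards [MeasureTheory.ae_restrict_mem measurableSet_Ioc] with u hu
      have := habs u hu.1 ((r:ℝ)+1) (by linarith [Nat.cast_nonneg (α := ℝ) r]) (by linarith) (le_refl _)
      convert this using 2
      ring
  · apply MeasureTheory.Integrable.mono'
      (g := fun u : ℝ => c ^ (((r:ℝ)+p)/2) / (((r:ℝ)+p)/2) * u ^ (((r:ℝ)+p)/2 - p - 1))
    · have hq0 : (0:ℝ) < ((r:ℝ)+p)/2 := by linarith [Nat.cast_nonneg (α := ℝ) r]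
      exact (integrableOn_Ioi_rpow_of_lt (by linarith) one_pos).const_mul _
    · exact aux_meas r p c hc measurableSet_Ioi (Set.Ioi_subset_Ioi zero_le_one)
    · filter_upwards [MeasureTheory.ae_restrict_mem measurableSet_Ioi] with u hu
      have hu0 : (0:ℝ) < u := lt_trans one_pos hu
      exact habs u hu0 (((r:ℝ)+p)/2) (by linarith [Nat.cast_nonneg (α := ℝ) r]) (by linarith) (by linarith)


lemma aux_scaling (r : ℕ) (p : ℝ) {c : ℝ} (hc : 0 < c) :
    ∫ u in Set.Ioi (0:ℝ), psiFun r (c * u) * u ^ (-p - 1)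
      = c ^ p * ∫ u in Set.Ioi (0:ℝ), psiFun r u * u ^ (-p - 1) := by
  have h1 : ∫ u in Set.Ioi (0:ℝ), psiFun r (c * u) * u ^ (-p - 1)
      = ∫ u in Set.Ioi (0:ℝ), c ^ (p + 1) * (psiFun r (c * u) * (c * u) ^ (-p - 1)) := by
    apply MeasureTheory.setIntegral_congr_fun measurableSet_Ioi
    intro u hu
    have hu0 : (0:ℝ) < u := hu
    simp only
    rw [Real.mul_rpow hc.le hu0.le]
    rw [show c ^ (p+1) * (psiFun r (c*u) * (c ^ (-p-1) * u ^ (-p-1)))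
        = (c ^ (p+1) * c ^ (-p-1)) * (psiFun r (c*u) * u ^ (-p-1)) by ring,
      ← Real.rpow_add hc]
    norm_num
  rw [h1, MeasureTheory.integral_const_mul,
    MeasureTheory.integral_comp_mul_left_Ioi (fun v => psiFun r v * v ^ (-p-1)) 0 hc,
    mul_zero, smul_eq_mul, ← mul_assoc]
  congr 1
  rw [← Real.rpow_neg_one c, ← Real.rpow_add hc]
  ring_nf

lemma C_pos (r : ℕ) {p : ℝ} (hrp : (r : ℝ) < p) (hpr : p < r + 1) :
    0 < ∫ u in Set.Ioi (0:ℝ), psiFun r u * u ^ (-p - 1) := by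
  have hint : MeasureTheory.IntegrableOn
      (fun u : ℝ => psiFun r u * u ^ (-p - 1)) (Set.Ioi 0) := by
    have := aux_integrable r hrp hpr one_pos
    simpa using this
  have hnn : 0 ≤ᵐ[volume.restrict (Set.Ioi (0:ℝ))]
      fun u : ℝ => psiFun r u * u ^ (-p - 1) := by
    filter_upwards [MeasureTheory.ae_restrict_mem measurableSet_Ioi] with u hu
    have hu0 : (0:ℝ) < u := hu
    exact mul_nonneg (psi_nonneg r hu0.le) (Real.rpow_nonneg hu0.le _)
  rw [MeasureTheory.setIntegral_pos_iff_support_of_nonneg_ae hnn hint]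
  have hsub : Set.Ioi (0:ℝ) ⊆ Function.support (fun u : ℝ => psiFun r u * u ^ (-p - 1)) := by
    intro u hu
    have hu0 : (0:ℝ) < u := hu
    exact ne_of_gt (mul_pos (psi_pos r hu0) (Real.rpow_pos_of_pos hu0 _))
  calc (0:ENNReal) < volume (Set.Ioi (0:ℝ)) := by simp [Real.volume_Ioi]
    _ ≤ volume (Function.support (fun u : ℝ => psiFun r u * u ^ (-p - 1)) ∩ Set.Ioi 0) := by
        apply MeasureTheory.measure_mono
        intro u hu; exact ⟨hsub hu, hu⟩

lemma sum_rpow_le (n : ℕ) (x y : Fin n → ℝ) (hx : ∀ i, 0 ≤ x i) (hy : ∀ i, 0 ≤ y i)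
    (r : ℕ) (h : ∀ t : ℝ, 0 < t → ∑ i, psiFun r (y i * t) ≤ ∑ i, psiFun r (x i * t))
    {p : ℝ} (hrp : (r : ℝ) < p) (hpr : p < r + 1) :
    ∑ i, y i ^ p ≤ ∑ i, x i ^ p := by
  have hp0 : 0 < p := lt_of_le_of_lt (Nat.cast_nonneg r) hrp
  set C := ∫ u in Set.Ioi (0:ℝ), psiFun r u * u ^ (-p-1) with hC
  have hCpos := C_pos r hrp hpr
  have key : ∀ z : ℝ, 0 ≤ z →
      (∫ u in Set.Ioi (0:ℝ), psiFun r (z*u) * u ^ (-p-1)) = z ^ p * C := by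
    intro z hz
    rcases hz.eq_or_lt with hz0 | hz0
    · simp [← hz0, psi_zero', Real.zero_rpow hp0.ne']
    · exact aux_scaling r p hz0
  have kint : ∀ z : ℝ, 0 ≤ z →
      MeasureTheory.IntegrableOn (fun u : ℝ => psiFun r (z*u) * u ^ (-p-1)) (Set.Ioi 0) := by
    intro z hz
    rcases hz.eq_or_lt with hz0 | hz0
    · have : (fun u : ℝ => psiFun r (z*u) * u ^ (-p-1)) = fun _ => (0:ℝ) := by
        funext u; rw [← hz0]; simp [psi_zero']
      rw [this]; exact MeasureTheory.integrable_zero _ _ _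
    · exact aux_integrable r hrp hpr hz0
  have hint : ∀ z : Fin n → ℝ, (∀ i, 0 ≤ z i) →
      (∫ u in Set.Ioi (0:ℝ), (∑ i, psiFun r (z i * u)) * u ^ (-p-1))
        = (∑ i, z i ^ p) * C := by
    intro z hz
    have e1 : ∀ u : ℝ, (∑ i, psiFun r (z i * u)) * u ^ (-p-1)
        = ∑ i, psiFun r (z i * u) * u ^ (-p-1) := fun u => Finset.sum_mul ..
    simp_rw [e1]
    rw [MeasureTheory.integral_finset_sum _ (fun i _ => kint (z i) (hz i))]
    rw [Finset.sum_congr rfl (fun i _ => key (z i) (hz i)), ← Finset.sum_mul]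
  have hcomp : (∫ u in Set.Ioi (0:ℝ), (∑ i, psiFun r (y i * u)) * u ^ (-p-1))
      ≤ ∫ u in Set.Ioi (0:ℝ), (∑ i, psiFun r (x i * u)) * u ^ (-p-1) := by
    apply MeasureTheory.setIntegral_mono_on
    · have e1 : ∀ u : ℝ, (∑ i, psiFun r (y i * u)) * u ^ (-p-1)
          = ∑ i, psiFun r (y i * u) * u ^ (-p-1) := fun u => Finset.sum_mul ..
      simp_rw [e1]
      exact MeasureTheory.integrable_finset_sum _ (fun i _ => kint (y i) (hy i))
    · have e1 : ∀ u : ℝ, (∑ i, psiFun r (x i * u)) * u ^ (-p-1)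
          = ∑ i, psiFun r (x i * u) * u ^ (-p-1) := fun u => Finset.sum_mul ..
      simp_rw [e1]
      exact MeasureTheory.integrable_finset_sum _ (fun i _ => kint (x i) (hx i))
    · exact measurableSet_Ioi
    · intro u hu
      have hu0 : (0:ℝ) < u := hu
      exact mul_le_mul_of_nonneg_right (h u hu0) (Real.rpow_nonneg hu0.le _)
  rw [hint x hx, hint y hy] at hcomp
  exact le_of_mul_le_mul_right hcomp hCpos

lemma sum_rpow_le_closed (n : ℕ) (x y : Fin n → ℝ) (hx : ∀ i, 0 ≤ x i) (hy : ∀ i, 0 ≤ y i)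
    (r : ℕ) (h : ∀ t : ℝ, 0 < t → ∑ i, psiFun r (y i * t) ≤ ∑ i, psiFun r (x i * t))
    {p : ℝ} (hp0 : 0 < p) (h1 : (r : ℝ) ≤ p) (h2 : p ≤ r + 1) :
    ∑ i, y i ^ p ≤ ∑ i, x i ^ p := by
  have hcl : p ∈ closure (Set.Ioo (r:ℝ) (r+1)) := by
    rw [closure_Ioo (by linarith : (r:ℝ) ≠ r+1)]
    exact ⟨h1, h2⟩
  have hnb : (nhdsWithin p (Set.Ioo (r:ℝ) (r+1))).NeBot :=
    mem_closure_iff_nhdsWithin_neBot.1 hcl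
  have htz : ∀ z : ℝ, 0 ≤ z → Filter.Tendsto (fun q : ℝ => z ^ q)
      (nhdsWithin p (Set.Ioo (r:ℝ) (r+1))) (nhds (z ^ p)) := by
    intro z hz
    rcases hz.eq_or_lt with hz0 | hz0
    · rw [← hz0, Real.zero_rpow hp0.ne']
      apply Filter.Tendsto.congr' _ tendsto_const_nhds
      filter_upwards [self_mem_nhdsWithin] with q hq
      have hq0 : 0 < q := lt_of_le_of_lt (Nat.cast_nonneg r) hq.1
      rw [Real.zero_rpow hq0.ne']
    · exact ((continuous_const.rpow continuous_id (fun _ => Or.inl hz0.ne')).tendsto p).mono_left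
        nhdsWithin_le_nhds
  have hT : Filter.Tendsto (fun q : ℝ => (∑ i, x i ^ q) - ∑ i, y i ^ q)
      (nhdsWithin p (Set.Ioo (r:ℝ) (r+1))) (nhds ((∑ i, x i ^ p) - ∑ i, y i ^ p)) := by
    apply Filter.Tendsto.sub
    · exact tendsto_finset_sum _ (fun i _ => htz (x i) (hx i))
    · exact tendsto_finset_sum _ (fun i _ => htz (y i) (hy i))
  have hEv : ∀ᶠ q in nhdsWithin p (Set.Ioo (r:ℝ) (r+1)),
      (0:ℝ) ≤ (∑ i, x i ^ q) - ∑ i, y i ^ q := by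
    filter_upwards [self_mem_nhdsWithin] with q hq
    have := sum_rpow_le n x y hx hy r h hq.1 hq.2
    linarith
  have := ge_of_tendsto hT hEv
  linarith

lemma prod_le (n : ℕ) (x y : Fin n → ℝ) (hx : ∀ i, 0 ≤ x i) (hy : ∀ i, 0 ≤ y i)
    (h : ∀ t : ℝ, 0 < t → ∑ i, psiFun 0 (y i * t) ≤ ∑ i, psiFun 0 (x i * t)) :
    ∏ i, y i ≤ ∏ i, x i := by
  have key : ∀ ε : ℝ, 0 < ε → ∏ i, (ε + y i) ≤ ∏ i, (ε + x i) := by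
    intro ε hε
    have ht := h ε⁻¹ (by positivity)
    have hexp : ∀ z : Fin n → ℝ, (∀ i, 0 ≤ z i) →
        Real.exp (∑ i, psiFun 0 (z i * ε⁻¹)) = ∏ i, (1 + z i * ε⁻¹) := by
      intro z hz
      rw [Real.exp_sum]
      apply Finset.prod_congr rfl
      intro i _
      have h1 : psiFun 0 (z i * ε⁻¹) = Real.log (1 + z i * ε⁻¹) := by simp [psiFun]
      have h2 : (0:ℝ) < 1 + z i * ε⁻¹ := by
        have := hz i
        have : 0 ≤ z i * ε⁻¹ := by positivity
        linarith
      rw [h1, Real.exp_log h2]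
    have hle := Real.exp_le_exp.2 ht
    rw [hexp x hx, hexp y hy] at hle
    have hscale : ∀ z : Fin n → ℝ, ε ^ n * ∏ i, (1 + z i * ε⁻¹) = ∏ i, (ε + z i) := by
      intro z
      have : (ε ^ n : ℝ) = ∏ _i : Fin n, ε := by simp
      rw [this, ← Finset.prod_mul_distrib]
      apply Finset.prod_congr rfl
      intro i _
      field_simp
    calc ∏ i, (ε + y i) = ε ^ n * ∏ i, (1 + y i * ε⁻¹) := (hscale y).symm
      _ ≤ ε ^ n * ∏ i, (1 + x i * ε⁻¹) :=
          mul_le_mul_of_nonneg_left hle (by positivity)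
      _ = ∏ i, (ε + x i) := hscale x
  have hT : ∀ z : Fin n → ℝ, Filter.Tendsto (fun ε : ℝ => ∏ i, (ε + z i))
      (nhdsWithin 0 (Set.Ioi 0)) (nhds (∏ i, z i)) := by
    intro z
    have hc : Continuous (fun ε : ℝ => ∏ i, (ε + z i)) :=
      continuous_finset_prod _ (fun i _ => continuous_id.add continuous_const)
    have := (hc.tendsto 0).mono_left (nhdsWithin_le_nhds (s := Set.Ioi (0:ℝ)))
    simpa using this
  apply le_of_tendsto_of_tendsto (hT y) (hT x)
  filter_upwards [self_mem_nhdsWithin] with ε hε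
  exact key ε hε

theorem stmt_5 (n : ℕ) (hn : 1 ≤ n) (x y : Fin n → ℝ)
    (hx : ∀ i, 0 ≤ x i) (hy : ∀ i, 0 ≤ y i) (r : ℕ)
    (h : ∀ t : ℝ, 0 < t → ∑ i, psiFun r (y i * t) ≤ ∑ i, psiFun r (x i * t)) :
    ∀ p : ℝ, (r : ℝ) ≤ p → p ≤ r + 1 → pNorm p y ≤ pNorm p x := by
  intro p hp1 hp2
  rcases eq_or_ne p 0 with hp0 | hp0
  · subst hp0
    have hr0 : r = 0 := by
      have h1 : (r:ℝ) ≤ 0 := hp1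
      exact_mod_cast Nat.le_zero.1 (by exact_mod_cast h1)
    rw [pNorm, if_pos rfl, pNorm, if_pos rfl]
    apply Real.rpow_le_rpow (Finset.prod_nonneg (fun i _ => hy i)) ?_ (by positivity)
    exact prod_le n x y hx hy (hr0 ▸ h)
  · have hppos : 0 < p := lt_of_le_of_ne (le_trans (Nat.cast_nonneg r) hp1) (Ne.symm hp0)
    rw [pNorm, if_neg hp0, pNorm, if_neg hp0]
    apply Real.rpow_le_rpow ?_ ?_ (by positivity)
    · exact mul_nonneg (by positivity)
        (Finset.sum_nonneg fun i _ => Real.rpow_nonneg (hy i) p)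
    · exact mul_le_mul_of_nonneg_left
        (sum_rpow_le_closed n x y hx hy r h hppos hp1 hp2) (by positivity)
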